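/- The co-size-based minimum-weight distance satisfies δ_cs(P,Q) = cs(P) + cs(Q) − 2·cs(P ⊔ Q) for all partitions P, Q of Fin n, where the co-size cs(P) is the number of two-block partitions coarser than P and δ_cs is the minimum-weight walk distance in the Hasse-diagram graph with edge weights given by differences of cs. -/

import Mathlib

open scoped BigOperators

/-- The Hasse-diagram graph of the partition lattice: `P` and `Q` are adjacent
iff one covers the other. -/
def hasse (n : ℕ) : SimpleGraph (Setoid (Fin n)) where
  Adj P Q := P ⋖ Q ∨ Q ⋖ P
  symm := ⟨fun P Q h => h.symm⟩
  loopless := ⟨fun P h => by cases h with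
    | inl h => exact lt_irrefl P h.lt
    | inr h => exact lt_irrefl P h.lt⟩

/-- The weight of an edge `{P,Q}` induced by `f`: `|f(P) - f(Q)|`. -/
noncomputable def eWeight {n : ℕ} (f : Setoid (Fin n) → ℝ) : Sym2 (Setoid (Fin n)) → ℝ :=
  Sym2.lift ⟨fun P Q => |f P - f Q|, fun P Q => abs_sub_comm (f P) (f Q)⟩

/-- The weight of a walk in the Hasse diagram: the sum of its edge weights. -/
noncomputable def walkWeight {n : ℕ} (f : Setoid (Fin n) → ℝ) {P Q : Setoid (Fin n)}
    (W : (hasse n).Walk P Q) : ℝ :=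
  (W.edges.map (eWeight f)).sum

/-- The minimum-`f`-weight distance `δ_f(P,Q)`: the minimum weight of a walk
from `P` to `Q` in the Hasse diagram. -/
noncomputable def deltaW {n : ℕ} (f : Setoid (Fin n) → ℝ) (P Q : Setoid (Fin n)) : ℝ :=
  sInf {w : ℝ | ∃ W : (hasse n).Walk P Q, walkWeight f W = w}

/-- Co-size of a partition: the number of two-block partitions (co-atoms)
coarser than `P`. -/
noncomputable def coSize (n : ℕ) (P : Setoid (Fin n)) : ℕ :=
  Set.ncard {R : Setoid (Fin n) | Nat.card (Quotient R) = 2 ∧ P ≤ R}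

/- ### Auxiliary material -/

instance instFinSetoid (n : ℕ) : Finite (Setoid (Fin n)) :=
  Finite.of_injective (fun P : Setoid (Fin n) => ⇑P) fun P Q h => by
    ext a b; exact iff_of_eq (congrFun (congrFun h a) b)

/-- The set of coatoms above `P`. -/
def setA (n : ℕ) (P : Setoid (Fin n)) : Set (Setoid (Fin n)) :=
  {R : Setoid (Fin n) | Nat.card (Quotient R) = 2 ∧ P ≤ R}

lemma coSize_eq (n : ℕ) (P : Setoid (Fin n)) : coSize n P = (setA n P).ncard := rfl

lemma setA_anti {n : ℕ} {P P' : Setoid (Fin n)} (h : P ≤ P') : setA n P' ⊆ setA n P :=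
  fun R hR => ⟨hR.1, h.trans hR.2⟩

lemma coSize_anti {n : ℕ} {P P' : Setoid (Fin n)} (h : P ≤ P') : coSize n P' ≤ coSize n P :=
  Set.ncard_le_ncard (setA_anti h) (Set.toFinite _)

lemma setA_sup {n : ℕ} (P Q : Setoid (Fin n)) : setA n (P ⊔ Q) = setA n P ∩ setA n Q := by
  ext R
  simp only [setA, Set.mem_setOf_eq, Set.mem_inter_iff, sup_le_iff]
  tauto

/-- Supermodularity-type inequality for `coSize`. -/
lemma coSize_supermod {n : ℕ} {P' P Q : Setoid (Fin n)} (h : P' ≤ P) :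
    coSize n P + coSize n (P' ⊔ Q) ≤ coSize n P' + coSize n (P ⊔ Q) := by
  have h1 := Set.ncard_inter_add_ncard_diff_eq_ncard (setA n P) (setA n Q) (Set.toFinite _)
  have h2 := Set.ncard_inter_add_ncard_diff_eq_ncard (setA n P') (setA n Q) (Set.toFinite _)
  have hd : (setA n P \ setA n Q).ncard ≤ (setA n P' \ setA n Q).ncard :=
    Set.ncard_le_ncard (Set.diff_subset_diff_left (setA_anti h)) (Set.toFinite _)
  rw [coSize_eq n (P ⊔ Q), coSize_eq n (P' ⊔ Q), setA_sup, setA_sup]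
  rw [coSize_eq n P, coSize_eq n P']
  omega

lemma walkWeight_nil {n : ℕ} (f : Setoid (Fin n) → ℝ) (P : Setoid (Fin n)) :
    walkWeight f (SimpleGraph.Walk.nil : (hasse n).Walk P P) = 0 := by
  simp [walkWeight]

lemma walkWeight_cons {n : ℕ} (f : Setoid (Fin n) → ℝ) {u v w : Setoid (Fin n)}
    (h : (hasse n).Adj u v) (W : (hasse n).Walk v w) :
    walkWeight f (SimpleGraph.Walk.cons h W) = |f u - f v| + walkWeight f W := by
  simp [walkWeight, eWeight]

lemma walkWeight_append {n : ℕ} (f : Setoid (Fin n) → ℝ) {u v w : Setoid (Fin n)}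
    (W1 : (hasse n).Walk u v) (W2 : (hasse n).Walk v w) :
    walkWeight f (W1.append W2) = walkWeight f W1 + walkWeight f W2 := by
  simp [walkWeight, SimpleGraph.Walk.edges_append]

lemma walkWeight_reverse {n : ℕ} (f : Setoid (Fin n) → ℝ) {u v : Setoid (Fin n)}
    (W : (hasse n).Walk u v) : walkWeight f W.reverse = walkWeight f W := by
  simp [walkWeight, SimpleGraph.Walk.edges_reverse, List.map_reverse, List.sum_reverse]

/-- Lower bound: every walk has weight at least `cs P + cs Q - 2 cs (P ⊔ Q)`. -/
lemma lb {n : ℕ} : ∀ {P Q : Setoid (Fin n)} (W : (hasse n).Walk P Q),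
    (coSize n P : ℝ) + (coSize n Q : ℝ) - 2 * (coSize n (P ⊔ Q) : ℝ)
      ≤ walkWeight (fun R => (coSize n R : ℝ)) W := by
  intro P Q W
  induction W with
  | nil =>
    rw [walkWeight_nil, sup_idem]
    ring_nf
    exact le_refl _
  | @cons u v w h W ih =>
    rw [walkWeight_cons]
    rcases h with h | h
    · -- u ⋖ v
      have h1 : (coSize n v : ℝ) ≤ coSize n u := by exact_mod_cast coSize_anti h.le
      have h2 : (coSize n (v ⊔ w) : ℝ) ≤ coSize n (u ⊔ w) := by
        exact_mod_cast coSize_anti (sup_le_sup_right h.le w)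
      rw [abs_of_nonneg (by linarith)]
      linarith
    · -- v ⋖ u
      have h1 : (coSize n u : ℝ) ≤ coSize n v := by exact_mod_cast coSize_anti h.le
      have h2 : (coSize n u : ℝ) + coSize n (v ⊔ w) ≤ coSize n v + coSize n (u ⊔ w) := by
        exact_mod_cast coSize_supermod (Q := w) h.le
      rw [abs_of_nonpos (by linarith), neg_sub]
      linarith

/-- Upward covering-chain walk with telescoping weight. -/
lemma exists_walk_up {n : ℕ} (T : Setoid (Fin n)) :
    ∀ P : Setoid (Fin n), P ≤ T → ∃ W : (hasse n).Walk P T,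
      walkWeight (fun R => (coSize n R : ℝ)) W = (coSize n P : ℝ) - coSize n T := by
  have wf : WellFounded ((· > ·) : Setoid (Fin n) → Setoid (Fin n) → Prop) := wellFounded_gt
  intro P
  induction P using WellFounded.induction wf with
  | _ P ih =>
    intro hPT
    by_cases hEq : P = T
    · subst hEq
      exact ⟨SimpleGraph.Walk.nil, by rw [walkWeight_nil]; ring⟩
    · have hlt : P < T := lt_of_le_of_ne hPT hEq
      obtain ⟨R, ⟨hPR, hRT⟩, hmin⟩ :=
        (wellFounded_lt (α := Setoid (Fin n))).has_min {R | P < R ∧ R ≤ T} ⟨T, hlt, le_rfl⟩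
      have hcov : P ⋖ R := ⟨hPR, fun z hz1 hz2 => hmin z ⟨hz1, hz2.le.trans hRT⟩ hz2⟩
      obtain ⟨W', hW'⟩ := ih R hPR hRT
      refine ⟨SimpleGraph.Walk.cons (show (hasse n).Adj P R from Or.inl hcov) W', ?_⟩
      rw [walkWeight_cons, hW']
      have h1 : (coSize n R : ℝ) ≤ coSize n P := by exact_mod_cast coSize_anti hcov.le
      rw [abs_of_nonneg (by linarith)]
      ring

/-- The co-size-based minimum-weight distance satisfies
`δ_cs(P,Q) = cs(P) + cs(Q) - 2 cs(P ⊔ Q)`. -/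
theorem deltaW_coSize (n : ℕ) (P Q : Setoid (Fin n)) :
    deltaW (fun R => (coSize n R : ℝ)) P Q =
      (coSize n P : ℝ) + (coSize n Q : ℝ) - 2 * (coSize n (P ⊔ Q) : ℝ) := by
  obtain ⟨W1, h1⟩ := exists_walk_up (P ⊔ Q) P le_sup_left
  obtain ⟨W2, h2⟩ := exists_walk_up (P ⊔ Q) Q le_sup_right
  have hW : walkWeight (fun R => (coSize n R : ℝ)) (W1.append W2.reverse) =
      (coSize n P : ℝ) + (coSize n Q : ℝ) - 2 * (coSize n (P ⊔ Q) : ℝ) := by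
    rw [walkWeight_append, walkWeight_reverse, h1, h2]; ring
  have hmem : (coSize n P : ℝ) + (coSize n Q : ℝ) - 2 * (coSize n (P ⊔ Q) : ℝ) ∈
      {w : ℝ | ∃ W : (hasse n).Walk P Q, walkWeight (fun R => (coSize n R : ℝ)) W = w} :=
    ⟨W1.append W2.reverse, hW⟩
  have hlb : ∀ w ∈ {w : ℝ | ∃ W : (hasse n).Walk P Q,
      walkWeight (fun R => (coSize n R : ℝ)) W = w},
      (coSize n P : ℝ) + (coSize n Q : ℝ) - 2 * (coSize n (P ⊔ Q) : ℝ) ≤ w := by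
    rintro w ⟨W, rfl⟩; exact lb W
  exact le_antisymm (csInf_le ⟨_, hlb⟩ hmem) (le_csInf ⟨_, hmem⟩ hlb)
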